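/- For positive integers $m, n$ and a non-negative integer $k$, define $f_{11}(m,n,k) = \sum_{\ell=0}^{k}\sum_{r=0}^{\ell} \frac{2^\ell (-1)^{k-\ell} \log^{k-\ell}(m/n)}{(k-\ell)!\,(\ell-r+1)!} \log^{\ell-r+1}(mN)$ for a parameter $N > 0$. Then the difference $f_{11}(m,n,k) - f_{11}(n,m,k)$ is independent of $N$ and equals $-\sum_{r=0}^{k} \frac{2^{k-r-1}}{(r+1)!}\left[\log^{r+1}\left(\frac{n}{m}\right) - \log^{r+1}\left(\frac{m}{n}\right)\right]$. -/

import Mathlib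

open Finset

/-- The quantity `f₁₁(m, n, k)` (depending on the parameter `N`). -/
noncomputable def f11 (m n : ℝ) (k : ℕ) (N : ℝ) : ℝ :=
  ∑ ℓ ∈ Finset.range (k + 1), ∑ r ∈ Finset.range (ℓ + 1),
    2 ^ ℓ * (-1 : ℝ) ^ (k - ℓ) * (Real.log (m / n)) ^ (k - ℓ)
      / ((Nat.factorial (k - ℓ) : ℝ) * (Nat.factorial (ℓ - r + 1) : ℝ))
      * (Real.log (m * N)) ^ (ℓ - r + 1)

lemma binom_div (x y : ℝ) (s : ℕ) :
    ∑ t ∈ range (s + 1), x ^ t * y ^ (s - t) / ((t.factorial : ℝ) * ((s - t).factorial : ℝ))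
      = (x + y) ^ s / (s.factorial : ℝ) := by
  rw [add_pow, sum_div]
  refine sum_congr rfl fun t ht => ?_
  have ht' : t ≤ s := Nat.lt_succ_iff.mp (mem_range.mp ht)
  have hc : ((s.choose t : ℝ)) * (t.factorial : ℝ) * ((s - t).factorial : ℝ)
      = (s.factorial : ℝ) := by exact_mod_cast Nat.choose_mul_factorial_mul_factorial ht'
  have h1 : (t.factorial : ℝ) ≠ 0 := Nat.cast_ne_zero.mpr (Nat.factorial_ne_zero _)
  have h2 : ((s - t).factorial : ℝ) ≠ 0 := Nat.cast_ne_zero.mpr (Nat.factorial_ne_zero _)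
  have h3 : (s.factorial : ℝ) ≠ 0 := Nat.cast_ne_zero.mpr (Nat.factorial_ne_zero _)
  field_simp
  linear_combination (-(x ^ t * y ^ (s - t))) * hc

lemma f11_closed (k : ℕ) (L A : ℝ) :
    ∑ ℓ ∈ Finset.range (k + 1), ∑ r ∈ Finset.range (ℓ + 1),
      2 ^ ℓ * (-1 : ℝ) ^ (k - ℓ) * L ^ (k - ℓ)
        / ((Nat.factorial (k - ℓ) : ℝ) * (Nat.factorial (ℓ - r + 1) : ℝ))
        * A ^ (ℓ - r + 1)
      = 2 ^ k * (∑ d ∈ range (k + 2), (A - L / 2) ^ d / (d.factorial : ℝ)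
          - ∑ d ∈ range (k + 2), (-(L / 2)) ^ d / (d.factorial : ℝ)) := by
  have step1 : ∀ ℓ : ℕ, ∑ r ∈ Finset.range (ℓ + 1),
      2 ^ ℓ * (-1 : ℝ) ^ (k - ℓ) * L ^ (k - ℓ)
        / ((Nat.factorial (k - ℓ) : ℝ) * (Nat.factorial (ℓ - r + 1) : ℝ))
        * A ^ (ℓ - r + 1)
      = ∑ j ∈ range (ℓ + 1),
      2 ^ ℓ * (-1 : ℝ) ^ (k - ℓ) * L ^ (k - ℓ)
        / ((Nat.factorial (k - ℓ) : ℝ) * (Nat.factorial (j + 1) : ℝ)) * A ^ (j + 1) := by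
    intro ℓ
    exact Finset.sum_range_reflect (fun j => 2 ^ ℓ * (-1 : ℝ) ^ (k - ℓ) * L ^ (k - ℓ)
        / ((Nat.factorial (k - ℓ) : ℝ) * (Nat.factorial (j + 1) : ℝ)) * A ^ (j + 1)) (ℓ + 1)
  calc
    _ = ∑ ℓ ∈ range (k + 1), ∑ j ∈ range (ℓ + 1),
        2 ^ ℓ * (-1 : ℝ) ^ (k - ℓ) * L ^ (k - ℓ)
          / ((Nat.factorial (k - ℓ) : ℝ) * (Nat.factorial (j + 1) : ℝ)) * A ^ (j + 1) :=
      sum_congr rfl fun ℓ _ => step1 ℓ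
    _ = ∑ i ∈ range (k + 1), ∑ j ∈ range (k - i + 1),
        2 ^ k * ((-(L / 2)) ^ i / (i.factorial : ℝ)) *
          (A ^ (j + 1) / ((j + 1).factorial : ℝ)) := by
      rw [← Finset.sum_range_reflect]
      refine sum_congr rfl fun i hi => ?_
      have hik : i ≤ k := Nat.lt_succ_iff.mp (mem_range.mp hi)
      have h1 : k + 1 - 1 - i = k - i := by omega
      rw [h1]
      have h2 : k - (k - i) = i := by omega
      refine sum_congr rfl fun j _ => ?_
      rw [h2]
      have h3 : (2 : ℝ) ^ (k - i) * 2 ^ i = 2 ^ k := by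
        rw [← pow_add]; congr 1; omega
      have h4 : (i.factorial : ℝ) ≠ 0 := Nat.cast_ne_zero.mpr (Nat.factorial_ne_zero _)
      have h5 : ((j + 1).factorial : ℝ) ≠ 0 := Nat.cast_ne_zero.mpr (Nat.factorial_ne_zero _)
      have h6 : (2 : ℝ) ^ i ≠ 0 := by positivity
      field_simp
      rw [neg_pow]
      have hh : (-1 / 2 : ℝ) ^ i * 2 ^ i = (-1) ^ i := by rw [← mul_pow]; norm_num
      linear_combination (L ^ i * A ^ (j + 1) * (-1 / 2 : ℝ) ^ i) * h3
        - (L ^ i * A ^ (j + 1) * 2 ^ (k - i)) * hh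
    _ = ∑ d ∈ range (k + 1), ∑ t ∈ range (d + 1),
        2 ^ k * ((-(L / 2)) ^ t / (t.factorial : ℝ)) *
          (A ^ (d - t + 1) / ((d - t + 1).factorial : ℝ)) := by
      rw [Finset.sum_range_diag_flip (k + 1) (fun i j => 2 ^ k *
        ((-(L / 2)) ^ i / (i.factorial : ℝ)) * (A ^ (j + 1) / ((j + 1).factorial : ℝ)))]
      refine sum_congr rfl fun i hi => ?_
      have : k + 1 - i = k - i + 1 := by
        have := Nat.lt_succ_iff.mp (mem_range.mp hi); omega
      rw [this]
    _ = ∑ d ∈ range (k + 1),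
        (2 ^ k * ((A - L / 2) ^ (d + 1) / ((d + 1).factorial : ℝ)
          - (-(L / 2)) ^ (d + 1) / ((d + 1).factorial : ℝ))) := by
      refine sum_congr rfl fun d _ => ?_
      have hb := binom_div (-(L / 2)) A (d + 1)
      rw [Finset.sum_range_succ] at hb
      have key : ∑ t ∈ range (d + 1), (-(L / 2)) ^ t * A ^ (d + 1 - t)
          / ((t.factorial : ℝ) * ((d + 1 - t).factorial : ℝ))
          = (-(L / 2) + A) ^ (d + 1) / ((d + 1).factorial : ℝ)
            - (-(L / 2)) ^ (d + 1) * A ^ (d + 1 - (d + 1))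
              / (((d + 1).factorial : ℝ) * ((d + 1 - (d + 1)).factorial : ℝ)) := by
        linarith [hb]
      have e1 : ∑ t ∈ range (d + 1), 2 ^ k * ((-(L / 2)) ^ t / (t.factorial : ℝ)) *
          (A ^ (d - t + 1) / ((d - t + 1).factorial : ℝ))
          = 2 ^ k * ∑ t ∈ range (d + 1), (-(L / 2)) ^ t * A ^ (d + 1 - t)
            / ((t.factorial : ℝ) * ((d + 1 - t).factorial : ℝ)) := by
        rw [Finset.mul_sum]
        refine sum_congr rfl fun t ht => ?_
        have htd : t ≤ d := Nat.lt_succ_iff.mp (mem_range.mp ht)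
        have : d - t + 1 = d + 1 - t := by omega
        rw [this]; ring
      rw [e1, key]
      simp only [Nat.sub_self, pow_zero, Nat.factorial_zero, Nat.cast_one, mul_one]
      have : -(L / 2) + A = A - L / 2 := by ring
      rw [this]
    _ = 2 ^ k * (∑ d ∈ range (k + 2), (A - L / 2) ^ d / (d.factorial : ℝ)
          - ∑ d ∈ range (k + 2), (-(L / 2)) ^ d / (d.factorial : ℝ)) := by
      rw [Finset.sum_range_succ' (fun d => (A - L / 2) ^ d / (d.factorial : ℝ)) (k + 1),
        Finset.sum_range_succ' (fun d => (-(L / 2)) ^ d / (d.factorial : ℝ)) (k + 1)]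
      simp only [pow_zero, Nat.factorial_zero, Nat.cast_one]
      rw [Finset.sum_congr rfl (fun d _ => mul_sub ((2 : ℝ) ^ k) _ _),
        Finset.sum_sub_distrib, ← Finset.mul_sum, ← Finset.mul_sum]
      ring

theorem f11_difference (m n : ℝ) (hm : 0 < m) (hn : 0 < n) (hmn : m ≠ n) (k : ℕ)
    (N : ℝ) (hN : 0 < N) :
    f11 m n k N - f11 n m k N
      = - ∑ r ∈ Finset.range (k + 1), ((2 : ℝ) ^ (k - r) / 2) / (Nat.factorial (r + 1) : ℝ)
          * ((Real.log (n / m)) ^ (r + 1) - (Real.log (m / n)) ^ (r + 1)) := by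
  have hLnm : Real.log (n / m) = - Real.log (m / n) := by
    rw [← Real.log_inv, inv_div]
  have hAn : Real.log (n * N) = Real.log (m * N) - Real.log (m / n) := by
    rw [Real.log_mul hn.ne' hN.ne', Real.log_mul hm.ne' hN.ne',
      Real.log_div hm.ne' hn.ne']
    ring
  unfold f11
  rw [f11_closed k (Real.log (m / n)) (Real.log (m * N)),
    f11_closed k (Real.log (n / m)) (Real.log (n * N)), hLnm, hAn]
  set L := Real.log (m / n) with hL
  set A := Real.log (m * N) with hA
  have e1 : A - L - -L / 2 = A - L / 2 := by ring
  have e2 : -(-L / 2) = L / 2 := by ring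
  rw [e1, e2]
  have e3 : ∀ x y : ℝ, (2 : ℝ) ^ k * (∑ d ∈ range (k + 2), x ^ d / (d.factorial : ℝ)
      - ∑ d ∈ range (k + 2), y ^ d / (d.factorial : ℝ))
      - 2 ^ k * (∑ d ∈ range (k + 2), x ^ d / (d.factorial : ℝ)
      - ∑ d ∈ range (k + 2), (L / 2) ^ d / (d.factorial : ℝ))
      = ∑ d ∈ range (k + 2),
          2 ^ k * ((L / 2) ^ d / (d.factorial : ℝ) - y ^ d / (d.factorial : ℝ)) := by
    intro x y
    rw [Finset.sum_congr rfl (fun d _ => mul_sub ((2 : ℝ) ^ k) _ _),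
      Finset.sum_sub_distrib, ← Finset.mul_sum, ← Finset.mul_sum]
    ring
  rw [e3]
  rw [Finset.sum_range_succ' (fun d => (2 : ℝ) ^ k * ((L / 2) ^ d / (d.factorial : ℝ)
    - (-(L / 2)) ^ d / (d.factorial : ℝ))) (k + 1)]
  simp only [pow_zero, Nat.factorial_zero, Nat.cast_one, sub_self, mul_zero, add_zero,
    div_one]
  rw [← Finset.sum_neg_distrib]
  refine sum_congr rfl fun r hr => ?_
  have hrk : r ≤ k := Nat.lt_succ_iff.mp (mem_range.mp hr)
  have h3 : (2 : ℝ) ^ (k - r) * 2 ^ r = 2 ^ k := by rw [← pow_add]; congr 1; omega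
  have h4 : ((r + 1).factorial : ℝ) ≠ 0 := Nat.cast_ne_zero.mpr (Nat.factorial_ne_zero _)
  have h5 : (-(L / 2)) ^ (r + 1) = (-L) ^ (r + 1) / 2 ^ (r + 1) := by
    rw [← div_pow]; ring_nf
  have h6 : (L / 2) ^ (r + 1) = L ^ (r + 1) / 2 ^ (r + 1) := by rw [← div_pow]
  rw [h5, h6]
  have h7 : (2 : ℝ) ^ (r + 1) ≠ 0 := by positivity
  field_simp
  linear_combination (-2 * (L ^ (r + 1) - (-L) ^ (r + 1))) * h3
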